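/- Let F be a figure with equilibrium function eq and base vertex w₀. If h and h' belong to H_F, then the pointwise minimum inf(h,h') and the pointwise maximum sup(h,h') also belong to H_F; consequently (H_F,≤), ordered pointwise, is a distributive lattice. -/

import Mathlib

open Classical

noncomputable section

abbrev Vtx : Type := ℤ × ℤ
abbrev GArc : Type := Vtx × Vtx

/-- `a` is an arc of the grid graph `Λ⁺`: its endpoints differ by a unit vector. -/
def IsArc (a : GArc) : Prop :=
  (a.2.1 - a.1.1).natAbs + (a.2.2 - a.1.2).natAbs = 1

/-- reversal of an arc -/
def arev (a : GArc) : GArc := (a.2, a.1)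

/-- `+1` if the cell with lower-left corner `c` is black, `-1` if it is white
(checkerboard coloring). -/
def colorSign (c : Vtx) : ℤ := if (c.1 + c.2) % 2 = 0 then 1 else -1

/-- spin of an arc: `+1` if a traveler along the arc has a white cell on its left,
`-1` otherwise. -/
def sp (a : GArc) : ℤ :=
  colorSign a.1 * ((a.2.2 - a.1.2) ^ 2 - (a.2.1 - a.1.1) ^ 2)

/-- the arcs of a path/cycle given by its list of vertices -/
def arcsOf (C : List Vtx) : List GArc := C.zip C.tail

/-- sum of a function `g` on arcs over all the arcs of `C` (with multiplicity) -/
def sumOn (g : GArc → ℤ) (C : List Vtx) : ℤ := ((arcsOf C).map g).sum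

/-- a (closed) cycle of the grid -/
def IsCycle (C : List Vtx) : Prop :=
  2 ≤ C.length ∧ C.head? = C.getLast? ∧ ∀ a ∈ arcsOf C, IsArc a

/-- an elementary cycle: no repeated vertex except the endpoints -/
def IsElemCycle (C : List Vtx) : Prop := IsCycle C ∧ C.dropLast.Nodup

/-- contribution of an arc to the winding number of a cycle around the center of
cell `c` (crossings of the horizontal ray going East from the center of `c`). -/
def windTerm (c : Vtx) (a : GArc) : ℤ :=
  if a.1.1 = a.2.1 ∧ c.1 < a.1.1 ∧ min a.1.2 a.2.2 = c.2 then a.2.2 - a.1.2 else 0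

/-- winding number of the cycle `C` around the center of the cell `c` -/
def wind (C : List Vtx) (c : Vtx) : ℤ := sumOn (windTerm c) C

/-- a cycle is clockwise when its winding number around any cell is nonpositive
(`-1` on enclosed cells, `0` elsewhere) -/
def IsClockwise (C : List Vtx) : Prop := ∀ c : Vtx, wind C c ≤ 0

/-- a cell is enclosed by `C` when the winding number of `C` around it is nonzero -/
def Encloses (C : List Vtx) (c : Vtx) : Prop := wind C c ≠ 0

/-- number of black cells minus number of white cells enclosed by a clockwise cycle -/
def Dis (C : List Vtx) : ℤ := -∑ᶠ c : Vtx, wind C c * colorSign c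

/-- 4-adjacency of cells (shared edge) -/
def adj4 (c c' : Vtx) : Prop := (c'.1 - c.1).natAbs + (c'.2 - c.2).natAbs = 1

/-- 8-adjacency of cells (shared vertex at least) -/
def adj8 (c c' : Vtx) : Prop := c ≠ c' ∧ (c'.1 - c.1).natAbs ≤ 1 ∧ (c'.2 - c.2).natAbs ≤ 1

/-- a figure: a nonempty, finite, 4-connected set of cells such that no vertex has
all its incident edges on the boundary (no diagonal pinch, so no vertex
duplication is needed). -/
def IsFigure (F : Finset Vtx) : Prop :=
  F.Nonempty ∧
  (∀ c ∈ F, ∀ c' ∈ F, Relation.ReflTransGen (fun x y => x ∈ F ∧ y ∈ F ∧ adj4 x y) c c') ∧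
  (∀ x y : ℤ,
    ¬((x - 1, y - 1) ∈ F ∧ (x, y) ∈ F ∧ (x, y - 1) ∉ F ∧ (x - 1, y) ∉ F) ∧
    ¬((x, y - 1) ∈ F ∧ (x - 1, y) ∈ F ∧ (x - 1, y - 1) ∉ F ∧ (x, y) ∉ F))

/-- one of the two cells adjacent to the edge `[a]` -/
def cellA (a : GArc) : Vtx :=
  if a.1.2 = a.2.2 then (min a.1.1 a.2.1, a.1.2) else (a.1.1, min a.1.2 a.2.2)

/-- the other cell adjacent to the edge `[a]` -/
def cellB (a : GArc) : Vtx :=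
  if a.1.2 = a.2.2 then (min a.1.1 a.2.1, a.1.2 - 1) else (a.1.1 - 1, min a.1.2 a.2.2)

/-- arcs of the graph `G_F`: the edge `[a]` is a side of a cell of `F` -/
def ArcF (F : Finset Vtx) (a : GArc) : Prop := IsArc a ∧ (cellA a ∈ F ∨ cellB a ∈ F)

/-- boundary arcs of `F`: exactly one of the two adjacent cells is in `F` -/
def BoundaryArcF (F : Finset Vtx) (a : GArc) : Prop :=
  IsArc a ∧ ¬(cellA a ∈ F ↔ cellB a ∈ F)

/-- interior arcs of `F`: both adjacent cells are in `F` -/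
def InteriorArcF (F : Finset Vtx) (a : GArc) : Prop :=
  IsArc a ∧ cellA a ∈ F ∧ cellB a ∈ F

/-- `v` is a corner of the cell with lower-left corner `c` -/
def isCorner (v c : Vtx) : Prop :=
  (v.1 = c.1 ∨ v.1 = c.1 + 1) ∧ (v.2 = c.2 ∨ v.2 = c.2 + 1)

/-- vertices of `G_F`: the corners of the cells of `F` -/
def VF (F : Finset Vtx) : Set Vtx := {v | ∃ c ∈ F, isCorner v c}

/-- a cycle of the graph `G_F` -/
def IsCycleF (F : Finset Vtx) (C : List Vtx) : Prop :=
  2 ≤ C.length ∧ C.head? = C.getLast? ∧ ∀ a ∈ arcsOf C, ArcF F a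

/-- an elementary cycle of the graph `G_F` -/
def IsElemCycleF (F : Finset Vtx) (C : List Vtx) : Prop :=
  IsCycleF F C ∧ C.dropLast.Nodup

/-- number of black cells of `F` minus number of white cells of `F` enclosed by
the clockwise cycle `C` -/
def DisF (F : Finset Vtx) (C : List Vtx) : ℤ := -∑ c ∈ F, wind C c * colorSign c

/-- `ef` is skew-symmetric on the arcs of `G_F` -/
def IsSkewOnF (F : Finset Vtx) (ef : GArc → ℤ) : Prop :=
  ∀ a, ArcF F a → ef (arev a) = -ef a

/-- an equilibrium function of the figure `F` -/
def IsEquilibrium (F : Finset Vtx) (ef : GArc → ℤ) : Prop :=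
  IsSkewOnF F ef ∧
  ∀ C, IsElemCycleF F C → IsClockwise C → sumOn sp C + sumOn ef C = 4 * DisF F C

/-- the four sides of the cell `c`, as canonically oriented arcs -/
def sides (c : Vtx) : List GArc :=
  [((c.1, c.2), (c.1 + 1, c.2)), ((c.1, c.2 + 1), (c.1 + 1, c.2 + 1)),
   ((c.1, c.2), (c.1, c.2 + 1)), ((c.1 + 1, c.2), (c.1 + 1, c.2 + 1))]

/-- a domino tiling of `F`, encoded by the symmetric set `D` of the arcs whose
underlying edges are the central axes of its dominoes: every central axis has
both of its adjacent cells in `F` (dominoes are included in `F`), and every cell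
of `F` is covered by exactly one domino (exactly one of its sides is a central
axis): no overlap and no gap. -/
def IsTiling (F : Finset Vtx) (D : Set GArc) : Prop :=
  (∀ a ∈ D, arev a ∈ D) ∧
  (∀ a ∈ D, IsArc a ∧ cellA a ∈ F ∧ cellB a ∈ F) ∧
  (∀ c ∈ F, ∃! a, a ∈ sides c ∧ a ∈ D)

/-- characteristic function of a tiling: `1` on central axes, `0` elsewhere -/
def chi (D : Set GArc) (a : GArc) : ℤ := if a ∈ D then 1 else 0

/-- the height difference function of a tiling -/
def gT (ef : GArc → ℤ) (D : Set GArc) (a : GArc) : ℤ :=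
  ef a - sp a + 2 * sp a * (1 - 2 * chi D a)

/-- the function `t`: `eq(a)-sp(a)+2` on interior arcs, `eq(a)+sp(a)` on boundary arcs -/
def tArc (F : Finset Vtx) (ef : GArc → ℤ) (a : GArc) : ℤ :=
  if cellA a ∈ F ∧ cellB a ∈ F then ef a - sp a + 2 else ef a + sp a

/-- the function `b`: `eq(a)-sp(a)-2` on interior arcs, `eq(a)+sp(a)` on boundary arcs -/
def bArc (F : Finset Vtx) (ef : GArc → ℤ) (a : GArc) : ℤ :=
  if cellA a ∈ F ∧ cellB a ∈ F then ef a - sp a - 2 else ef a + sp a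

/-- the 8-connected component of the cell `c` in the complement of `F` -/
def comp8 (F : Finset Vtx) (c : Vtx) : Set Vtx :=
  {c' | Relation.ReflTransGen (fun x y => x ∉ F ∧ y ∉ F ∧ adj8 x y) c c'}

/-- `c` belongs to a hole of `F` (a finite 8-connected component of the complement) -/
def IsHoleCell (F : Finset Vtx) (c : Vtx) : Prop := c ∉ F ∧ (comp8 F c).Finite

/-- `c` belongs to `H_∞`, the infinite 8-connected component of the complement -/
def IsHinfCell (F : Finset Vtx) (c : Vtx) : Prop := c ∉ F ∧ ¬(comp8 F c).Finite

/-- `w` is a vertex of `V_F` on the boundary of `H_∞` -/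
def OnOuterBoundary (F : Finset Vtx) (w : Vtx) : Prop :=
  w ∈ VF F ∧ ∃ c, IsHinfCell F c ∧ isCorner w c

/-- vertices on the boundary of `F` -/
def Vb (F : Finset Vtx) : Set Vtx :=
  {v | (∃ c ∈ F, isCorner v c) ∧ ∃ c, c ∉ F ∧ isCorner v c}

/-- `h` belongs to the class `H_F` of height functions -/
def InHF (F : Finset Vtx) (ef : GArc → ℤ) (w0 : Vtx) (h : Vtx → ℤ) : Prop :=
  h w0 = 0 ∧ ∀ a, ArcF F a →
    (h a.2 - h a.1 = bArc F ef a ∨ h a.2 - h a.1 = tArc F ef a)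

/-- `h` is the height function induced by the tiling `D` (based at `w0`) -/
def IsHeightOf (F : Finset Vtx) (ef : GArc → ℤ) (D : Set GArc) (w0 : Vtx)
    (h : Vtx → ℤ) : Prop :=
  h w0 = 0 ∧ ∀ a, ArcF F a → h a.2 - h a.1 = gT ef D a

/-- a critical cycle: an elementary cycle of `G_F` with `t(C) = 0` -/
def CriticalCycle (F : Finset Vtx) (ef : GArc → ℤ) (C : List Vtx) : Prop :=
  IsElemCycleF F C ∧ sumOn (tArc F ef) C = 0

/-- a strongly critical cycle: critical, and `sp(a) = 1` on all its interior arcs -/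
def StronglyCriticalCycle (F : Finset Vtx) (ef : GArc → ℤ) (C : List Vtx) : Prop :=
  CriticalCycle F ef C ∧ ∀ a ∈ arcsOf C, InteriorArcF F a → sp a = 1

/-- two vertices are critically equivalent when some critical cycle passes
through both -/
def critRel (F : Finset Vtx) (ef : GArc → ℤ) (v v' : Vtx) : Prop :=
  ∃ C, CriticalCycle F ef C ∧ v ∈ C ∧ v' ∈ C

/-- the forced component of the vertex `v` (class of the equivalence relation
generated by critical equivalence) -/
def fcomp (F : Finset Vtx) (ef : GArc → ℤ) (v : Vtx) : Set Vtx :=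
  {v' | v' ∈ VF F ∧ Relation.EqvGen (critRel F ef) v v'}

/-- `S` is a forced component of `F` -/
def IsForcedComponent (F : Finset Vtx) (ef : GArc → ℤ) (S : Set Vtx) : Prop :=
  ∃ v ∈ VF F, S = fcomp F ef v

/-- `a` is an arc of the graph `G_T` of the tiling `D` -/
def GTArc (F : Finset Vtx) (ef : GArc → ℤ) (D : Set GArc) (a : GArc) : Prop :=
  ArcF F a ∧ gT ef D a = tArc F ef a

/-- there is a directed path in `G_T` from `u` to `v` -/
def GTReach (F : Finset Vtx) (ef : GArc → ℤ) (D : Set GArc) (u v : Vtx) : Prop :=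
  Relation.ReflTransGen (fun x y => GTArc F ef D (x, y)) u v

/-- the result of an upward flip on the component `S`: add `4` on `S` -/
def flipUpAt (S : Set Vtx) (h : Vtx → ℤ) : Vtx → ℤ :=
  fun v => h v + S.indicator (fun _ => (4 : ℤ)) v

/-- the result of a downward flip on the component `S`: subtract `4` on `S` -/
def flipDownAt (S : Set Vtx) (h : Vtx → ℤ) : Vtx → ℤ :=
  fun v => h v - S.indicator (fun _ => (4 : ℤ)) v

/-- `|h(v_S) - h'(v_S)|` for a representative `v_S` of `S` -/
def compDiff (h h' : Vtx → ℤ) (S : Set Vtx) : ℤ :=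
  if hS : S.Nonempty then |h hS.some - h' hS.some| else 0

/-- the distance `Δ(h,h') = Σ_U |h(v_U) - h'(v_U)|` over forced components `U` -/
def Delta (F : Finset Vtx) (ef : GArc → ℤ) (h h' : Vtx → ℤ) : ℤ :=
  ∑ᶠ S ∈ {S : Set Vtx | IsForcedComponent F ef S}, compDiff h h' S

/-- a sequence of `n` allowed upward flips at forced components distinct from `U_∞` -/
def UpFlipSeq (F : Finset Vtx) (ef : GArc → ℤ) (w0 : Vtx) (f : ℕ → Vtx → ℤ)
    (n : ℕ) : Prop :=
  ∀ i < n, ∃ S, IsForcedComponent F ef S ∧ S ≠ fcomp F ef w0 ∧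
    InHF F ef w0 (f i) ∧ InHF F ef w0 (f (i + 1)) ∧ f (i + 1) = flipUpAt S (f i)

/-- a sequence of `n` allowed (upward or downward) flips, flipping at step `i`
the forced component `s i` (distinct from `U_∞`) -/
def FlipSeq (F : Finset Vtx) (ef : GArc → ℤ) (w0 : Vtx) (f : ℕ → Vtx → ℤ)
    (s : ℕ → Set Vtx) (n : ℕ) : Prop :=
  ∀ i < n, IsForcedComponent F ef (s i) ∧ s i ≠ fcomp F ef w0 ∧
    InHF F ef w0 (f i) ∧ InHF F ef w0 (f (i + 1)) ∧
    (f (i + 1) = flipUpAt (s i) (f i) ∨ f (i + 1) = flipDownAt (s i) (f i))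

/-- the four arcs of the two horizontal edges through `v` (central axes of the
pair of vertical dominoes covering the 2×2 square centered at `v`) -/
def hPairAxes (v : Vtx) : Set GArc :=
  {((v.1 - 1, v.2), v), (v, (v.1 - 1, v.2)), (v, (v.1 + 1, v.2)), ((v.1 + 1, v.2), v)}

/-- the four arcs of the two vertical edges through `v` (central axes of the
pair of horizontal dominoes covering the 2×2 square centered at `v`) -/
def vPairAxes (v : Vtx) : Set GArc :=
  {((v.1, v.2 - 1), v), (v, (v.1, v.2 - 1)), (v, (v.1, v.2 + 1)), ((v.1, v.2 + 1), v)}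

/-- a local flip: replace the pair of dominoes covering a 2×2 square by the
other pair covering the same square -/
def LocalFlip (D D' : Set GArc) : Prop :=
  ∃ v : Vtx, (hPairAxes v ⊆ D ∧ D' = (D \ hPairAxes v) ∪ vPairAxes v) ∨
             (vPairAxes v ⊆ D ∧ D' = (D \ vPairAxes v) ∪ hPairAxes v)

/-- a sequence of `n` local flips between tilings of `F` -/
def LocalFlipSeq (F : Finset Vtx) (g : ℕ → Set GArc) (n : ℕ) : Prop :=
  ∀ i < n, IsTiling F (g i) ∧ IsTiling F (g (i + 1)) ∧ LocalFlip (g i) (g (i + 1))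

/-- `h` is a maximal element of `(H_F, ≤)` -/
def MaximalInHF (F : Finset Vtx) (ef : GArc → ℤ) (w0 : Vtx) (h : Vtx → ℤ) : Prop :=
  InHF F ef w0 h ∧ ∀ h', InHF F ef w0 h' →
    (∀ v ∈ VF F, h v ≤ h' v) → ∀ v ∈ VF F, h' v = h v

/-- `h` is a minimal element of `(H_F, ≤)` -/
def MinimalInHF (F : Finset Vtx) (ef : GArc → ℤ) (w0 : Vtx) (h : Vtx → ℤ) : Prop :=
  InHF F ef w0 h ∧ ∀ h', InHF F ef w0 h' →
    (∀ v ∈ VF F, h' v ≤ h v) → ∀ v ∈ VF F, h' v = h v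

/-- an elementary cycle of `G_F` enclosing a single cell of `F` -/
def AroundSingleCell (F : Finset Vtx) (C : List Vtx) : Prop :=
  IsElemCycleF F C ∧ ∃ c ∈ F, ∀ c' : Vtx, wind C c' ≠ 0 ↔ c' = c

/-- a cycle of `G_F` following clockwise the boundary of a hole of `F`: it
winds `-1` around each cell of the hole and `0` around every other cell -/
def IsClockwiseHoleContour (F : Finset Vtx) (C : List Vtx) : Prop :=
  IsElemCycleF F C ∧ ∃ c₀, IsHoleCell F c₀ ∧
    (∀ c ∈ comp8 F c₀, wind C c = -1) ∧ (∀ c ∉ comp8 F c₀, wind C c = 0)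


section Aux

private lemma isArc_cases (a : GArc) (ha : IsArc a) :
    (a.1.2 = a.2.2 ∧ (a.2.1 = a.1.1 + 1 ∨ a.2.1 = a.1.1 - 1)) ∨
    (a.1.1 = a.2.1 ∧ a.1.2 ≠ a.2.2 ∧ (a.2.2 = a.1.2 + 1 ∨ a.2.2 = a.1.2 - 1)) := by
  unfold IsArc at ha; omega

private lemma corners_of_cells (a : GArc) (ha : IsArc a) :
    isCorner a.1 (cellA a) ∧ isCorner a.2 (cellA a) ∧
    isCorner a.1 (cellB a) ∧ isCorner a.2 (cellB a) := by
  rcases isArc_cases a ha with ⟨h1, h2⟩ | ⟨h1, h2, h3⟩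
  · rcases h2 with h | h
    · have hmin : min a.1.1 a.2.1 = a.1.1 := by omega
      have hA : cellA a = (a.1.1, a.1.2) := by simp only [cellA, if_pos h1, hmin]
      have hB : cellB a = (a.1.1, a.1.2 - 1) := by simp only [cellB, if_pos h1, hmin]
      rw [hA, hB]
      exact ⟨⟨Or.inl rfl, Or.inl rfl⟩, ⟨Or.inr h, Or.inl h1.symm⟩,
        ⟨Or.inl rfl, Or.inr (by omega)⟩, ⟨Or.inr h, Or.inr (by omega)⟩⟩
    · have hmin : min a.1.1 a.2.1 = a.2.1 := by omega
      have hA : cellA a = (a.2.1, a.1.2) := by simp only [cellA, if_pos h1, hmin]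
      have hB : cellB a = (a.2.1, a.1.2 - 1) := by simp only [cellB, if_pos h1, hmin]
      rw [hA, hB]
      exact ⟨⟨Or.inr (by omega), Or.inl rfl⟩, ⟨Or.inl rfl, Or.inl h1.symm⟩,
        ⟨Or.inr (by omega), Or.inr (by omega)⟩, ⟨Or.inl rfl, Or.inr (by omega)⟩⟩
  · rcases h3 with h | h
    · have hmin : min a.1.2 a.2.2 = a.1.2 := by omega
      have hA : cellA a = (a.1.1, a.1.2) := by simp only [cellA, if_neg h2, hmin]
      have hB : cellB a = (a.1.1 - 1, a.1.2) := by simp only [cellB, if_neg h2, hmin]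
      rw [hA, hB]
      exact ⟨⟨Or.inl rfl, Or.inl rfl⟩, ⟨Or.inl h1.symm, Or.inr h⟩,
        ⟨Or.inr (by omega), Or.inl rfl⟩, ⟨Or.inr (by omega), Or.inr h⟩⟩
    · have hmin : min a.1.2 a.2.2 = a.2.2 := by omega
      have hA : cellA a = (a.1.1, a.2.2) := by simp only [cellA, if_neg h2, hmin]
      have hB : cellB a = (a.1.1 - 1, a.2.2) := by simp only [cellB, if_neg h2, hmin]
      rw [hA, hB]
      exact ⟨⟨Or.inl rfl, Or.inr (by omega)⟩, ⟨Or.inl h1.symm, Or.inl rfl⟩,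
        ⟨Or.inr (by omega), Or.inr (by omega)⟩, ⟨Or.inr (by omega), Or.inl rfl⟩⟩

private lemma arcF_symm {F : Finset Vtx} {a : GArc} (ha : ArcF F a) : ArcF F (a.2, a.1) := by
  obtain ⟨h1, h2⟩ := ha
  have hsym : IsArc (a.2, a.1) := by
    unfold IsArc at h1 ⊢
    show (a.1.1 - a.2.1).natAbs + (a.1.2 - a.2.2).natAbs = 1
    omega
  have hA : cellA (a.2, a.1) = cellA a := by
    rcases isArc_cases a h1 with ⟨hx, _⟩ | ⟨hx, hy, _⟩ <;>
      simp only [cellA] <;> split_ifs <;>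
      simp_all [Prod.ext_iff] <;> omega
  have hB : cellB (a.2, a.1) = cellB a := by
    rcases isArc_cases a h1 with ⟨hx, _⟩ | ⟨hx, hy, _⟩ <;>
      simp only [cellB] <;> split_ifs <;>
      simp_all [Prod.ext_iff] <;> omega
  exact ⟨hsym, by rw [hA, hB]; exact h2⟩

/-- reachability in the graph `G_F` -/
private def ReachF (F : Finset Vtx) : Vtx → Vtx → Prop :=
  Relation.ReflTransGen (fun x y => ArcF F (x, y))

private lemma reachF_symm {F : Finset Vtx} {u v : Vtx} (h : ReachF F u v) : ReachF F v u := by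
  have hsymm : Symmetric (fun x y : Vtx => ArcF F (x, y)) :=
    fun x y hxy => arcF_symm (a := (x, y)) hxy
  exact (@Relation.ReflTransGen.symmetric _ _ ⟨hsymm⟩).symm _ _ h

private lemma cellA_bottom (c : Vtx) : cellA ((c.1, c.2), (c.1 + 1, c.2)) = c := by
  unfold cellA
  rw [if_pos rfl, min_eq_left (by omega : c.1 ≤ c.1 + 1)]

private lemma cellA_left (c : Vtx) : cellA ((c.1, c.2), (c.1, c.2 + 1)) = c := by
  unfold cellA
  rw [if_neg (by omega : ¬ (c.2 : ℤ) = c.2 + 1), min_eq_left (by omega : c.2 ≤ c.2 + 1)]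

private lemma cellB_right (c : Vtx) : cellB ((c.1 + 1, c.2), (c.1 + 1, c.2 + 1)) = c := by
  unfold cellB
  rw [if_neg (by omega : ¬ (c.2 : ℤ) = c.2 + 1), min_eq_left (by omega : c.2 ≤ c.2 + 1)]
  show (c.1 + 1 - 1, c.2) = c
  rw [show c.1 + 1 - 1 = c.1 by ring]

private lemma side_arcs {c : Vtx} {F : Finset Vtx} (hc : c ∈ F) :
    ArcF F ((c.1, c.2), (c.1 + 1, c.2)) ∧ ArcF F ((c.1, c.2), (c.1, c.2 + 1)) ∧
    ArcF F ((c.1 + 1, c.2), (c.1 + 1, c.2 + 1)) := by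
  refine ⟨⟨by simp [IsArc], Or.inl ?_⟩, ⟨by simp [IsArc], Or.inl ?_⟩,
    ⟨by simp [IsArc], Or.inr ?_⟩⟩
  · rw [cellA_bottom]; exact hc
  · rw [cellA_left]; exact hc
  · rw [cellB_right]; exact hc

private lemma corner_reach {F : Finset Vtx} {c : Vtx} (hc : c ∈ F) {v v' : Vtx}
    (hv : isCorner v c) (hv' : isCorner v' c) : ReachF F v v' := by
  obtain ⟨a1, a2, a3⟩ := side_arcs hc
  have rA : ReachF F (c.1, c.2) (c.1 + 1, c.2) := Relation.ReflTransGen.single a1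
  have rB : ReachF F (c.1, c.2) (c.1, c.2 + 1) := Relation.ReflTransGen.single a2
  have rC : ReachF F (c.1, c.2) (c.1 + 1, c.2 + 1) := rA.tail a3
  have key : ∀ w : Vtx, isCorner w c → ReachF F (c.1, c.2) w := by
    intro w hw
    obtain ⟨hw1, hw2⟩ := hw
    have hcases : w = (c.1, c.2) ∨ w = (c.1 + 1, c.2) ∨ w = (c.1, c.2 + 1) ∨
        w = (c.1 + 1, c.2 + 1) := by
      rcases hw1 with h | h <;> rcases hw2 with h' | h' <;>
        simp [Prod.ext_iff, h, h']
    rcases hcases with rfl | rfl | rfl | rfl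
    · exact Relation.ReflTransGen.refl
    · exact rA
    · exact rB
    · exact rC
  exact (reachF_symm (key v hv)).trans (key v' hv')

private lemma adj_reach {F : Finset Vtx} {c c' : Vtx} (hc : c ∈ F) (hc' : c' ∈ F)
    (hadj : adj4 c c') : ReachF F (c.1, c.2) (c'.1, c'.2) := by
  have hcases : c' = (c.1 + 1, c.2) ∨ c' = (c.1 - 1, c.2) ∨ c' = (c.1, c.2 + 1) ∨
      c' = (c.1, c.2 - 1) := by
    unfold adj4 at hadj
    rcases c' with ⟨x, y⟩; rcases c with ⟨u, v⟩
    simp only [Prod.ext_iff]; simp only [Prod.fst, Prod.snd] at hadj ⊢; omega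
  rcases hcases with rfl | rfl | rfl | rfl
  · exact corner_reach hc ⟨Or.inl rfl, Or.inl rfl⟩ ⟨Or.inr rfl, Or.inl rfl⟩
  · exact reachF_symm (corner_reach hc' ⟨Or.inl rfl, Or.inl rfl⟩ ⟨Or.inr (by ring), Or.inl rfl⟩)
  · exact corner_reach hc ⟨Or.inl rfl, Or.inl rfl⟩ ⟨Or.inl rfl, Or.inr rfl⟩
  · exact reachF_symm (corner_reach hc' ⟨Or.inl rfl, Or.inl rfl⟩ ⟨Or.inl rfl, Or.inr (by ring)⟩)

private lemma reach_all {F : Finset Vtx} (hF : IsFigure F) {w0 v : Vtx}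
    (hw : w0 ∈ VF F) (hv : v ∈ VF F) : ReachF F w0 v := by
  obtain ⟨c0, hc0, hw0c⟩ := hw
  obtain ⟨c, hc, hvc⟩ := hv
  have step : ∀ c', Relation.ReflTransGen (fun x y => x ∈ F ∧ y ∈ F ∧ adj4 x y) c0 c' →
      ReachF F (c0.1, c0.2) (c'.1, c'.2) := by
    intro c' hrt
    induction hrt with
    | refl => exact Relation.ReflTransGen.refl
    | tail hab hbc ih => exact ih.trans (adj_reach hbc.1 hbc.2.1 hbc.2.2)
  exact ((corner_reach hc0 hw0c ⟨Or.inl rfl, Or.inl rfl⟩).trans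
    (step c (hF.2.1 c0 hc0 c hc))).trans
    (corner_reach hc ⟨Or.inl rfl, Or.inl rfl⟩ hvc)

private lemma tb_rel (F : Finset Vtx) (ef : GArc → ℤ) (a : GArc) :
    tArc F ef a = bArc F ef a ∨ tArc F ef a = bArc F ef a + 4 := by
  unfold tArc bArc; split_ifs <;> omega

private lemma arc_fst_VF {F : Finset Vtx} {a : GArc} (ha : ArcF F a) : a.1 ∈ VF F := by
  rcases ha.2 with hA | hB
  · exact ⟨cellA a, hA, (corners_of_cells a ha.1).1⟩
  · exact ⟨cellB a, hB, (corners_of_cells a ha.1).2.2.1⟩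

end Aux

end
/-- `H_F` is closed under pointwise `min` and `max`, hence
`(H_F, ≤)` is a distributive lattice. -/
theorem HF_closed_under_inf_sup (F : Finset Vtx) (hF : IsFigure F)
    (ef : GArc → ℤ) (hef : IsEquilibrium F ef)
    (w0 : Vtx) (hw0 : OnOuterBoundary F w0)
    (h h' : Vtx → ℤ) (hh : InHF F ef w0 h) (hh' : InHF F ef w0 h') :
    InHF F ef w0 (fun v => min (h v) (h' v)) ∧
    InHF F ef w0 (fun v => max (h v) (h' v)) := by
  obtain ⟨hz, hstep⟩ := hh
  obtain ⟨hz', hstep'⟩ := hh'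
  have cong4 : ∀ v, v ∈ VF F → 4 ∣ h v - h' v := by
    intro v hv
    have hr : ReachF F w0 v := reach_all hF hw0.1 hv
    clear hv
    induction hr with
    | refl => simp [hz, hz']
    | @tail b c _ harc ih =>
        have s1 : h c - h b = bArc F ef (b, c) ∨ h c - h b = tArc F ef (b, c) :=
          hstep (b, c) harc
        have s2 : h' c - h' b = bArc F ef (b, c) ∨ h' c - h' b = tArc F ef (b, c) :=
          hstep' (b, c) harc
        have htb := tb_rel F ef (b, c)
        omega
  refine ⟨⟨by simp [hz, hz'], fun a ha => ?_⟩, ⟨by simp [hz, hz'], fun a ha => ?_⟩⟩ <;>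
  · have hd := cong4 a.1 (arc_fst_VF ha)
    have hd2 := cong4 a.2 (arc_fst_VF (arcF_symm ha))
    have s1 := hstep a ha
    have s2 := hstep' a ha
    have htb := tb_rel F ef a
    simp only []
    omega
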